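/- Let n be a natural number and p₁, p₂, p₃, p₄, p₅, f₀ ∈ ℝⁿ. Suppose there exist complex vectors b, c, e, f̃, v, w ∈ ℂⁿ such that for all d_ε, u ∈ ℝⁿ the identity ½p₁⊙d_ε^{⊙2} − p₃⊙d_ε⊙u + ½p₂⊙u^{⊙2} + p₄⊙d_ε − p₅⊙u + f₀ = (b⊙d_ε + c⊙u + v) ⊙ (e⊙d_ε + f̃⊙u + w) holds in ℂⁿ. Then for every component j the determinant Δ_j = ½·det [[p₁ⱼ, −p₃ⱼ, p₄ⱼ], [−p₃ⱼ, p₂ⱼ, −p₅ⱼ], [p₄ⱼ, −p₅ⱼ, 2f₀ⱼ]] vanishes: Δ_j = 0. -/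
import Mathlib


/-- if the quadratic vector expression of the Tensor Equation admits a
Hadamard factorization into two linear factors (over ℂ, for all real `dε` and `u`),
then the determinant `Δⱼ` vanishes in every component. -/
theorem hadamard_factorization_implies_det_zero
    {n : ℕ} (p₁ p₂ p₃ p₄ p₅ f₀ : Fin n → ℝ)
    (hfac : ∃ b c e ft v w : Fin n → ℂ,
      ∀ (dε u : Fin n → ℝ), ∀ j : Fin n,
        ((1 / 2 : ℂ) * (p₁ j : ℂ) * (dε j : ℂ) ^ 2
            - (p₃ j : ℂ) * (dε j : ℂ) * (u j : ℂ)
            + (1 / 2 : ℂ) * (p₂ j : ℂ) * (u j : ℂ) ^ 2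
            + (p₄ j : ℂ) * (dε j : ℂ)
            - (p₅ j : ℂ) * (u j : ℂ)
            + (f₀ j : ℂ))
          = (b j * (dε j : ℂ) + c j * (u j : ℂ) + v j)
            * (e j * (dε j : ℂ) + ft j * (u j : ℂ) + w j)) :
    ∀ j, (1 / 2 : ℝ) * Matrix.det
        !![p₁ j, -p₃ j, p₄ j; -p₃ j, p₂ j, -p₅ j; p₄ j, -p₅ j, 2 * f₀ j] = 0 := by
  intro j
  obtain ⟨b, c, e, ft, v, w, h⟩ := hfac
  have h' : ∀ x y : ℝ,
      ((1 / 2 : ℂ) * (p₁ j : ℂ) * (x : ℂ) ^ 2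
          - (p₃ j : ℂ) * (x : ℂ) * (y : ℂ)
          + (1 / 2 : ℂ) * (p₂ j : ℂ) * (y : ℂ) ^ 2
          + (p₄ j : ℂ) * (x : ℂ)
          - (p₅ j : ℂ) * (y : ℂ)
          + (f₀ j : ℂ))
        = (b j * (x : ℂ) + c j * (y : ℂ) + v j)
          * (e j * (x : ℂ) + ft j * (y : ℂ) + w j) := by
    intro x y
    exact h (fun _ => x) (fun _ => y) j
  have h00 := h' 0 0
  have h10 := h' 1 0
  have hm10 := h' (-1) 0
  have h01 := h' 0 1
  have h0m1 := h' 0 (-1)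
  have h11 := h' 1 1
  push_cast at h00 h10 hm10 h01 h0m1 h11
  have E6 : (f₀ j : ℂ) = v j * w j := by linear_combination h00
  have E1 : (p₁ j : ℂ) = 2 * b j * e j := by linear_combination h10 + hm10 - 2 * h00
  have E4 : (p₄ j : ℂ) = b j * w j + v j * e j := by
    linear_combination (h10 - hm10) / 2
  have E2 : (p₂ j : ℂ) = 2 * c j * ft j := by linear_combination h01 + h0m1 - 2 * h00
  have E5 : (p₅ j : ℂ) = -(c j * w j + v j * ft j) := by
    linear_combination (h0m1 - h01) / 2
  have E3 : (p₃ j : ℂ) = -(b j * ft j + c j * e j) := by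
    linear_combination h10 + h01 - h00 - h11
  simp [Matrix.det_fin_three]
  apply Complex.ofReal_injective
  push_cast
  rw [E1, E2, E3, E4, E5, E6]
  ring
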